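/- arXiv:2001.07324 — 2 statements merged into one kernel-verified Lean document; each statement's English description precedes it below -/
import Mathlib

section
/- Let r: S^n × [0,T) → (0,∞) be smooth and satisfy ∂_t r(ξ,t) = −θ(t) f(x) r^{n+2} K /(φ(r) u) + r(ξ,t), where θ(t) = ∫_{S^n} φ(r(ξ,t)) dξ / ∫_{S^n} f dx, and the change of variables between the radial parametrization ξ and normal parametrization x satisfies dx/dξ = r^{n+1}K/u. Then the functional V_φ(Ω_t) = ∫_{S^n} ∫_0^{r(ξ,t)} φ(s)/s ds dξ is constant in t. -/
open Metric MeasureTheory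
open scoped ENNReal

section Aux

variable {α : Type*} [MeasurableSpace α] [TopologicalSpace α] [OpensMeasurableSpace α]
  [CompactSpace α] [T2Space α] [SecondCountableTopology α] {μ : Measure α} [IsFiniteMeasure μ]

private lemma aux_integrable_of_cont {g : α → ℝ} (hg : Continuous g) : Integrable g μ :=
  hg.integrable_of_hasCompactSupport (HasCompactSupport.of_compactSpace g)

private lemma aux_cont_param_integral {G : α × ℝ → ℝ} (hG : Continuous G) :
    Continuous (fun t => ∫ a, G (a, t) ∂μ) := by
  rw [continuous_iff_continuousAt]
  intro t₀
  obtain ⟨C, hC⟩ := (isCompact_univ.prod (isCompact_Icc (a := t₀ - 1) (b := t₀ + 1))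
    ).exists_bound_of_continuousOn hG.continuousOn
  apply continuousAt_of_dominated (bound := fun _ => C)
  · exact Filter.Eventually.of_forall fun t =>
      (hG.comp (continuous_id.prodMk continuous_const)).aestronglyMeasurable
  · filter_upwards [Icc_mem_nhds (by linarith : t₀ - 1 < t₀) (by linarith : t₀ < t₀ + 1)]
      with t ht
    exact Filter.Eventually.of_forall fun a => hC (a, t) ⟨Set.mem_univ _, ht⟩
  · exact integrable_const C
  · exact Filter.Eventually.of_forall fun a =>
      (hG.comp (Continuous.prodMk_right a)).continuousAt

end Aux


section Aux2

variable {α : Type*} [MeasurableSpace α] [TopologicalSpace α] [OpensMeasurableSpace α]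
  [CompactSpace α] [T2Space α] [SecondCountableTopology α] {μ : Measure α} [IsFiniteMeasure μ]

/-- If `t ↦ g (·, t)` has pointwise derivative `H (·, t)` on `(0,T)`, `g, H` are continuous
and `∫ H (·, t) = 0` for `t ∈ (0,T)`, then `t ↦ ∫ g (·, t)` is constant on `[0,T)`. -/
private theorem aux_const (T : ℝ) (hT : 0 < T)
    {g H : α × ℝ → ℝ} (hg : Continuous g) (hH : Continuous H)
    (hd : ∀ ξ, ∀ t ∈ Set.Ioo (0:ℝ) T, HasDerivAt (fun t => g (ξ, t)) (H (ξ, t)) t)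
    (hz : ∀ t ∈ Set.Ioo (0:ℝ) T, ∫ ξ, H (ξ, t) ∂μ = 0) :
    ∀ t ∈ Set.Ico (0:ℝ) T, ∫ ξ, g (ξ, t) ∂μ = ∫ ξ, g (ξ, 0) ∂μ := by
  set V : ℝ → ℝ := fun t => ∫ ξ, g (ξ, t) ∂μ with hVdef
  have hVc : Continuous V := aux_cont_param_integral hg
  have hVderiv : ∀ t₀ ∈ Set.Ioo (0:ℝ) T, HasDerivAt V 0 t₀ := by
    intro t₀ ht₀
    set ε := min t₀ (T - t₀) with hεdef
    have hεpos : 0 < ε := lt_min ht₀.1 (sub_pos.2 ht₀.2)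
    have hball : ball t₀ ε ⊆ Set.Ioo 0 T := by
      intro x hx
      rw [Real.ball_eq_Ioo] at hx
      constructor
      · have := hx.1; have h1 : ε ≤ t₀ := min_le_left _ _; linarith
      · have := hx.2; have h2 : ε ≤ T - t₀ := min_le_right _ _; linarith
    obtain ⟨C, hC⟩ := (isCompact_univ.prod (isCompact_Icc (a := t₀ - ε) (b := t₀ + ε))
      ).exists_bound_of_continuousOn hH.continuousOn
    have key := hasDerivAt_integral_of_dominated_loc_of_deriv_le (μ := μ)
      (F := fun t ξ => g (ξ, t)) (F' := fun t ξ => H (ξ, t))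
      (bound := fun _ => C) (x₀ := t₀) (ball_mem_nhds t₀ hεpos)
      (Filter.Eventually.of_forall fun t =>
        (hg.comp (continuous_id.prodMk continuous_const)).aestronglyMeasurable)
      (aux_integrable_of_cont (hg.comp (continuous_id.prodMk continuous_const)))
      ((hH.comp (continuous_id.prodMk continuous_const)).aestronglyMeasurable)
      ?_ (integrable_const C) ?_
    · rcases key with ⟨-, hdV⟩
      rwa [hz t₀ ht₀] at hdV
    · exact Filter.Eventually.of_forall fun ξ t ht =>
        hC (ξ, t) ⟨Set.mem_univ _, by
          rw [Real.ball_eq_Ioo] at ht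
          exact ⟨ht.1.le, ht.2.le⟩⟩
    · exact Filter.Eventually.of_forall fun ξ t ht => hd ξ t (hball ht)
  have hVconst : ∀ t₁ ∈ Set.Ioo (0:ℝ) T, ∀ t₂ ∈ Set.Ioo (0:ℝ) T, V t₁ = V t₂ := by
    intro t₁ ht₁ t₂ ht₂
    have h := Convex.norm_image_sub_le_of_norm_hasDerivWithin_le
      (f := V) (f' := fun _ => (0:ℝ)) (s := Set.Ioo 0 T) (C := 0)
      (fun x hx => (hVderiv x hx).hasDerivWithinAt)
      (fun x _ => by simp) (convex_Ioo 0 T) ht₁ ht₂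
    rw [zero_mul] at h
    have h2 := norm_le_zero_iff.1 h
    linarith [sub_eq_zero.1 h2]
  intro t ht
  rcases eq_or_lt_of_le ht.1 with h0 | h0
  · rw [← h0]
  · have htIoo : t ∈ Set.Ioo 0 T := ⟨h0, ht.2⟩
    have hne : (nhdsWithin (0:ℝ) (Set.Ioo 0 T)).NeBot := by
      rw [← mem_closure_iff_nhdsWithin_neBot, closure_Ioo hT.ne]
      exact ⟨le_refl 0, hT.le⟩
    have h1 : Filter.Tendsto V (nhdsWithin (0:ℝ) (Set.Ioo 0 T)) (nhds (V 0)) :=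
      (hVc.continuousAt).continuousWithinAt
    have h2 : Filter.Tendsto V (nhdsWithin (0:ℝ) (Set.Ioo 0 T)) (nhds (V t)) := by
      apply Filter.Tendsto.congr' _ (tendsto_const_nhds (x := V t))
      filter_upwards [self_mem_nhdsWithin] with s hs
      exact hVconst t htIoo s hs
    exact tendsto_nhds_unique h2 h1

end Aux2

set_option maxHeartbeats 1000000 in
/-- Conservation of the quantity `V_φ(Ω_t) = ∫_{S^n} ∫_0^{r(ξ,t)} φ(s)/s ds dξ`
along the normalized flow `∂_t r = -θ(t) f(x) r^{n+2} K / (φ(r) u) + r`, where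
`θ(t) = ∫ φ(r) dξ / ∫ f dx`, `K` is the Gauss curvature, `u` the support
function, `xmap` the Gauss map (outer normal direction of the point with radial
direction `ξ`), and the change of variables `dx/dξ = r^{n+1} K / u` holds. -/
theorem V_phi_invariant_under_flow {n : ℕ} (T : ℝ) (hT : 0 < T)
    (φ : ℝ → ℝ) (hφcont : ContinuousOn φ (Set.Ioi 0))
    (hφpos : ∀ s > (0:ℝ), 0 < φ s)
    (hΦ : ∀ t > (0:ℝ), IntervalIntegrable (fun s => φ s / s) volume 0 t)
    (f : sphere (0 : EuclideanSpace ℝ (Fin (n+1))) 1 → ℝ)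
    (hf : Continuous f) (hfpos : ∀ x, 0 < f x)
    (r u K : sphere (0 : EuclideanSpace ℝ (Fin (n+1))) 1 → ℝ → ℝ)
    (xmap : sphere (0 : EuclideanSpace ℝ (Fin (n+1))) 1 → ℝ →
      sphere (0 : EuclideanSpace ℝ (Fin (n+1))) 1)
    (hrc : Continuous (fun p : sphere (0 : EuclideanSpace ℝ (Fin (n+1))) 1 × ℝ => r p.1 p.2))
    (huc : Continuous (fun p : sphere (0 : EuclideanSpace ℝ (Fin (n+1))) 1 × ℝ => u p.1 p.2))
    (hKc : Continuous (fun p : sphere (0 : EuclideanSpace ℝ (Fin (n+1))) 1 × ℝ => K p.1 p.2))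
    (hxc : Continuous (fun p : sphere (0 : EuclideanSpace ℝ (Fin (n+1))) 1 × ℝ => xmap p.1 p.2))
    (hrpos : ∀ ξ t, 0 < r ξ t) (hupos : ∀ ξ t, 0 < u ξ t) (hKpos : ∀ ξ t, 0 < K ξ t)
    (θ : ℝ → ℝ)
    (hθ : ∀ t, θ t =
      (∫ ξ, φ (r ξ t) ∂(volume : Measure (EuclideanSpace ℝ (Fin (n+1)))).toSphere) /
      (∫ x, f x ∂(volume : Measure (EuclideanSpace ℝ (Fin (n+1)))).toSphere))
    (hflow : ∀ ξ, ∀ t ∈ Set.Ico (0:ℝ) T,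
      HasDerivWithinAt (r ξ)
        (-θ t * f (xmap ξ t) * (r ξ t) ^ (n+2) * K ξ t / (φ (r ξ t) * u ξ t) + r ξ t)
        (Set.Ico (0:ℝ) T) t)
    (hjac : ∀ t ∈ Set.Ico (0:ℝ) T,
      ∫ ξ, f (xmap ξ t) * (r ξ t) ^ (n+1) * K ξ t / u ξ t
          ∂(volume : Measure (EuclideanSpace ℝ (Fin (n+1)))).toSphere =
        ∫ x, f x ∂(volume : Measure (EuclideanSpace ℝ (Fin (n+1)))).toSphere) :
    ∀ t ∈ Set.Ico (0:ℝ) T,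
      (∫ ξ, (∫ s in (0:ℝ)..(r ξ t), φ s / s)
          ∂(volume : Measure (EuclideanSpace ℝ (Fin (n+1)))).toSphere) =
      (∫ ξ, (∫ s in (0:ℝ)..(r ξ 0), φ s / s)
          ∂(volume : Measure (EuclideanSpace ℝ (Fin (n+1)))).toSphere) := by
  set μ := (volume : Measure (EuclideanSpace ℝ (Fin (n+1)))).toSphere with hμdef
  -- basic continuity facts
  have hφs_cont : ContinuousOn (fun s => φ s / s) (Set.Ioi 0) :=
    hφcont.div continuousOn_id (fun s hs => ne_of_gt hs)
  have hΦderiv : ∀ x > (0:ℝ), HasDerivAt (fun y => ∫ s in (0:ℝ)..y, φ s / s) (φ x / x) x :=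
    fun x hx =>
    intervalIntegral.integral_hasDerivAt_right (hΦ x hx)
      (hφs_cont.stronglyMeasurableAtFilter isOpen_Ioi x hx)
      (hφs_cont.continuousAt (Ioi_mem_nhds hx))
  have hGc : Continuous (fun p : sphere (0 : EuclideanSpace ℝ (Fin (n+1))) 1 × ℝ =>
      ∫ s in (0:ℝ)..(r p.1 p.2), φ s / s) := by
    rw [continuous_iff_continuousAt]
    intro p
    exact ContinuousAt.comp
      (f := fun p : sphere (0 : EuclideanSpace ℝ (Fin (n+1))) 1 × ℝ => r p.1 p.2)
      ((hΦderiv _ (hrpos p.1 p.2)).continuousAt) hrc.continuousAt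
  have hφr : Continuous (fun p : sphere (0 : EuclideanSpace ℝ (Fin (n+1))) 1 × ℝ =>
      φ (r p.1 p.2)) := by
    rw [continuous_iff_continuousAt]
    intro p
    exact ContinuousAt.comp
      (f := fun p : sphere (0 : EuclideanSpace ℝ (Fin (n+1))) 1 × ℝ => r p.1 p.2)
      (hφcont.continuousAt (Ioi_mem_nhds (hrpos p.1 p.2))) hrc.continuousAt
  have hNc : Continuous (fun t => ∫ ξ, φ (r ξ t) ∂μ) := aux_cont_param_integral hφr
  have hθc : Continuous θ :=
    (hNc.div_const _).congr (fun t => (hθ t).symm)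
  -- the "derivative" integrand
  set H : sphere (0 : EuclideanSpace ℝ (Fin (n+1))) 1 × ℝ → ℝ := fun p =>
    -θ p.2 * f (xmap p.1 p.2) * (r p.1 p.2) ^ (n+1) * K p.1 p.2 / u p.1 p.2 + φ (r p.1 p.2)
    with hHdef
  have hHc : Continuous H := by
    apply Continuous.add _ hφr
    exact ((((hθc.comp continuous_snd).neg.mul (hf.comp hxc)).mul
      (hrc.pow _)).mul hKc).div huc (fun p => (hupos _ _).ne')
  -- positivity of ∫ f
  have hfint : Integrable f μ := aux_integrable_of_cont hf
  have hcpos : 0 < ∫ x, f x ∂μ := by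
    rw [integral_pos_iff_support_of_nonneg (fun x => (hfpos x).le) hfint]
    have hsupp : Function.support f = Set.univ := by
      ext x; simp [Function.mem_support, (hfpos x).ne']
    rw [hsupp]
    have huniv : μ Set.univ = (n+1 : ℕ) *
        (volume : Measure (EuclideanSpace ℝ (Fin (n+1)))) (ball 0 1) := by
      rw [hμdef, Measure.toSphere_apply_univ]
      congr 1
      simp [finrank_euclideanSpace]
    rw [huniv]
    have hb : (0:ℝ≥0∞) < (volume : Measure (EuclideanSpace ℝ (Fin (n+1)))) (ball 0 1) :=
      measure_ball_pos _ _ one_pos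
    exact ENNReal.mul_pos (by exact_mod_cast Nat.succ_ne_zero n) hb.ne'
  -- pointwise derivative of the integrand
  have hd : ∀ ξ, ∀ t ∈ Set.Ioo (0:ℝ) T,
      HasDerivAt (fun t => ∫ s in (0:ℝ)..(r ξ t), φ s / s) (H (ξ, t)) t := by
    intro ξ t htIoo
    have htIco : t ∈ Set.Ico 0 T := ⟨htIoo.1.le, htIoo.2⟩
    have hr : HasDerivAt (r ξ)
        (-θ t * f (xmap ξ t) * (r ξ t) ^ (n+2) * K ξ t / (φ (r ξ t) * u ξ t) + r ξ t) t :=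
      (hflow ξ t htIco).hasDerivAt (Ico_mem_nhds htIoo.1 htIoo.2)
    have hcomp := HasDerivAt.comp t (hΦderiv _ (hrpos ξ t)) hr
    have heq : H (ξ, t) = φ (r ξ t) / r ξ t *
        (-θ t * f (xmap ξ t) * (r ξ t) ^ (n+2) * K ξ t / (φ (r ξ t) * u ξ t) + r ξ t) := by
      have hR := hrpos ξ t
      have hU := hupos ξ t
      have hφR := hφpos _ hR
      simp only [hHdef]
      field_simp
      ring
    rw [heq]
    exact hcomp
  -- the integral of H vanishes
  have hz : ∀ t ∈ Set.Ioo (0:ℝ) T, ∫ ξ, H (ξ, t) ∂μ = 0 := by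
    intro t₀ ht₀
    have hint1 : Integrable (fun ξ =>
        f (xmap ξ t₀) * (r ξ t₀) ^ (n+1) * K ξ t₀ / u ξ t₀) μ := by
      apply aux_integrable_of_cont
      exact (((hf.comp (hxc.comp (continuous_id.prodMk continuous_const))).mul
        ((hrc.comp (continuous_id.prodMk continuous_const)).pow _)).mul
        (hKc.comp (continuous_id.prodMk continuous_const))).div
        (huc.comp (continuous_id.prodMk continuous_const))
        (fun ξ => (hupos _ _).ne')
    have hint2 : Integrable (fun ξ => φ (r ξ t₀)) μ :=
      aux_integrable_of_cont (hφr.comp (continuous_id.prodMk continuous_const))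
    have hsplit : (∫ ξ, H (ξ, t₀) ∂μ) =
        (-θ t₀) * (∫ ξ, f (xmap ξ t₀) * (r ξ t₀) ^ (n+1) * K ξ t₀ / u ξ t₀ ∂μ) +
        (∫ ξ, φ (r ξ t₀) ∂μ) := by
      rw [← integral_const_mul, ← integral_add (hint1.const_mul _) hint2]
      apply integral_congr_ae
      filter_upwards with ξ
      simp only [hHdef]
      ring
    rw [hsplit, hjac t₀ ⟨ht₀.1.le, ht₀.2⟩, hθ t₀]
    field_simp
    ring
  exact aux_const T hT hGc hHc hd hz
end

section
/- Let u(·,t) be a smooth solution of the normalized flow ∂_t u = −θ(t) f(x) r^{n+1} K / φ(r) + u on S^n × [0,T), with θ(t) = ∫ φ(r) dξ / ∫ f dx. Then the functional J(t) = ∫_{S^n} log u(x,t) f(x) dx is non-increasing in t, and dJ/dt = 0 at time t if and only if u(·,t) satisfies the elliptic equation (u φ(r)/r^{n+1}) det(u_{ij} + u δ_{ij}) = θ(t) f on S^n. -/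
open Metric MeasureTheory Set Filter



section aux

lemma integrable_of_continuous_compact {X : Type*} [TopologicalSpace X] [CompactSpace X]
    [T2Space X] [MeasurableSpace X] [OpensMeasurableSpace X] (μ : Measure X)
    [IsFiniteMeasure μ] {g : X → ℝ} (hg : Continuous g) : Integrable g μ :=
  integrableOn_univ.mp (hg.continuousOn.integrableOn_compact isCompact_univ)

lemma hasDerivWithinAt_integral_of_continuous
    {X : Type*} [TopologicalSpace X] [CompactSpace X] [T2Space X]
    [MeasurableSpace X] [OpensMeasurableSpace X] (μ : Measure X) [IsFiniteMeasure μ]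
    (G v : X → ℝ → ℝ)
    (hG : Continuous fun p : X × ℝ => G p.1 p.2)
    (hv : Continuous fun p : X × ℝ => v p.1 p.2)
    {s : Set ℝ} (hs : Convex ℝ s)
    (hd : ∀ x, ∀ τ ∈ s, HasDerivWithinAt (G x) (v x τ) s τ)
    {t : ℝ} (ht : t ∈ s) :
    HasDerivWithinAt (fun τ => ∫ x, G x τ ∂μ) (∫ x, v x t ∂μ) s t := by
  have hint : ∀ τ : ℝ, Integrable (fun x => G x τ) μ := fun τ =>
    integrable_of_continuous_compact μ (hG.comp (continuous_id.prodMk continuous_const))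
  have hvint : Integrable (fun x => v x t) μ :=
    integrable_of_continuous_compact μ (hv.comp (continuous_id.prodMk continuous_const))
  rw [hasDerivWithinAt_iff_isLittleO, Asymptotics.isLittleO_iff]
  intro c hc
  set M := (μ univ).toReal with hMdef
  have hM : 0 ≤ M := ENNReal.toReal_nonneg
  set c' := c / (M + 1) with hc'
  have hc'pos : 0 < c' := div_pos hc (by linarith)
  obtain ⟨δ, hδpos, hδ⟩ : ∃ δ > 0, ∀ x : X, ∀ τ : ℝ, |τ - t| < δ → |v x τ - v x t| < c' := by
    have hcont : Continuous fun p : X × ℝ => |v p.1 p.2 - v p.1 t| :=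
      (hv.sub (hv.comp (continuous_fst.prodMk continuous_const))).abs
    have hO : IsOpen {p : X × ℝ | |v p.1 p.2 - v p.1 t| < c'} :=
      isOpen_lt hcont continuous_const
    obtain ⟨U, V, hUo, hVo, hU, hV, hUV⟩ :=
      generalized_tube_lemma isCompact_univ (isCompact_singleton (x := t)) hO
        (by rintro ⟨x, τ⟩ ⟨-, hτ⟩
            simp only [mem_singleton_iff] at hτ
            simp [hτ, hc'pos])
    obtain ⟨δ, hδpos, hball⟩ := Metric.isOpen_iff.1 hVo t (hV rfl)
    refine ⟨δ, hδpos, fun x τ hτ => ?_⟩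
    have : (x, τ) ∈ U ×ˢ V :=
      ⟨hU (mem_univ x), hball (by simpa [Real.dist_eq] using hτ)⟩
    exact hUV this
  have hmem : s ∩ Metric.ball t δ ∈ nhdsWithin t s :=
    inter_mem_nhdsWithin s (Metric.ball_mem_nhds t hδpos)
  filter_upwards [hmem] with τ hτ
  set s' := s ∩ Metric.ball t δ with hs'
  have hs'conv : Convex ℝ s' := hs.inter (convex_ball t δ)
  have hts' : t ∈ s' := ⟨ht, Metric.mem_ball_self hδpos⟩
  have hpoint : ∀ x : X, ‖G x τ - G x t - (τ - t) * v x t‖ ≤ c' * |τ - t| := by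
    intro x
    have hder : ∀ σ ∈ s', HasDerivWithinAt (fun σ => G x σ - v x t * σ)
        (v x σ - v x t) s' σ := by
      intro σ hσ
      have hsub : s' ⊆ s := inter_subset_left
      have h1 := ((hd x σ hσ.1).mono hsub).sub
        (((hasDerivAt_id σ).const_mul (v x t)).hasDerivWithinAt (s := s'))
      rw [mul_one] at h1
      exact h1
    have hbound : ∀ σ ∈ s', ‖v x σ - v x t‖ ≤ c' := by
      intro σ hσ
      have := hδ x σ (by simpa [Real.dist_eq] using hσ.2)
      simpa [Real.norm_eq_abs] using this.le
    have := Convex.norm_image_sub_le_of_norm_hasDerivWithin_le hder hbound hs'conv hts' hτ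
    calc ‖G x τ - G x t - (τ - t) * v x t‖
        = ‖(G x τ - v x t * τ) - (G x t - v x t * t)‖ := by ring_nf
      _ ≤ c' * ‖τ - t‖ := this
      _ = c' * |τ - t| := by rw [Real.norm_eq_abs]
  have key : (∫ x, G x τ ∂μ) - (∫ x, G x t ∂μ) - (τ - t) * (∫ x, v x t ∂μ)
      = ∫ x, (G x τ - G x t - (τ - t) * v x t) ∂μ := by
    rw [← integral_const_mul, ← integral_sub (hint τ) (hint t)]
    exact (integral_sub ((hint τ).sub (hint t)) (hvint.const_mul _)).symm
  have hnorm : ‖(∫ x, G x τ ∂μ) - (∫ x, G x t ∂μ) - (τ - t) • (∫ x, v x t ∂μ)‖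
      ≤ (c' * |τ - t|) * M := by
    rw [smul_eq_mul, key]
    exact norm_integral_le_of_norm_le_const (Eventually.of_forall hpoint)
  refine hnorm.trans ?_
  have h1 : c' * M ≤ c := by
    rw [hc', div_mul_eq_mul_div, div_le_iff₀ (by linarith)]
    nlinarith
  calc (c' * |τ - t|) * M = (c' * M) * |τ - t| := by ring
    _ ≤ c * |τ - t| := by
        apply mul_le_mul_of_nonneg_right h1 (abs_nonneg _)
    _ = c * ‖τ - t‖ := by rw [Real.norm_eq_abs]

end aux


section sphereAux

variable {n : ℕ}

local notation "E" => EuclideanSpace ℝ (Fin (n+1))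

lemma toSphere_pos {s : Set (sphere (0 : EuclideanSpace ℝ (Fin (n+1))) 1)}
    (hs : IsOpen s) (hne : s.Nonempty) :
    0 < (volume : Measure (EuclideanSpace ℝ (Fin (n+1)))).toSphere s := by
  rw [Measure.toSphere_apply' _ hs.measurableSet]
  set r₁ : Ioi (0:ℝ) := ⟨1, mem_Ioi.2 one_pos⟩ with hr₁
  have key := Measure.toSphere_apply_aux (volume : Measure E) s r₁
  have hIio : IsOpen (Iio r₁ : Set (Ioi (0:ℝ))) := by
    have : (Iio r₁ : Set (Ioi (0:ℝ))) = Subtype.val ⁻¹' (Iio (1:ℝ)) := by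
      ext y; exact Iff.rfl
    rw [this]
    exact isOpen_Iio.preimage continuous_subtype_val
  have hA : IsOpen ((↑) '' ((homeomorphUnitSphereProd E) ⁻¹' (s ×ˢ Iio r₁)) : Set E) := by
    apply (isOpen_compl_singleton (x := (0:E))).isOpenMap_subtype_val
    exact (hs.prod hIio).preimage (homeomorphUnitSphereProd E).continuous
  have hAne : ((↑) '' ((homeomorphUnitSphereProd E) ⁻¹' (s ×ˢ Iio r₁)) : Set E).Nonempty := by
    obtain ⟨x, hx⟩ := hne
    refine ⟨_, ⟨(homeomorphUnitSphereProd E).symm (x, ⟨(1:ℝ)/2, by norm_num⟩), ?_, rfl⟩⟩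
    simp only [Set.mem_preimage, Homeomorph.apply_symm_apply]
    refine ⟨hx, ?_⟩
    rw [Set.mem_Iio, hr₁, Subtype.mk_lt_mk]
    norm_num
  have hpos := hA.measure_pos (volume : Measure E) hAne
  rw [key] at hpos
  have hdim : Module.finrank ℝ E ≠ 0 := by
    simp [finrank_euclideanSpace_fin]
  exact ENNReal.mul_pos (by exact_mod_cast Nat.cast_ne_zero.2 hdim) hpos.ne'

lemma integrable_of_continuous_compact' {X : Type*} [TopologicalSpace X] [CompactSpace X]
    [T2Space X] [MeasurableSpace X] [OpensMeasurableSpace X] (μ : Measure X)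
    [IsFiniteMeasure μ] {g : X → ℝ} (hg : Continuous g) : Integrable g μ :=
  integrableOn_univ.mp (hg.continuousOn.integrableOn_compact isCompact_univ)

lemma sphere_integral_pos {g : sphere (0 : EuclideanSpace ℝ (Fin (n+1))) 1 → ℝ}
    (hg : Continuous g) (hpos : ∀ x, 0 < g x) :
    0 < ∫ x, g x ∂(volume : Measure (EuclideanSpace ℝ (Fin (n+1)))).toSphere := by
  have hint := integrable_of_continuous_compact'
    (volume : Measure E).toSphere hg
  rw [integral_pos_iff_support_of_nonneg (fun x => (hpos x).le) hint]
  have hsupp : Function.support g = Set.univ := by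
    ext x; simp [Function.mem_support, (hpos x).ne']
  rw [hsupp]
  have : Nonempty (sphere (0 : E) 1) :=
    (NormedSpace.sphere_nonempty.mpr zero_le_one).coe_sort
  exact toSphere_pos isOpen_univ univ_nonempty

lemma sphere_zero_of_integral_zero {h : sphere (0 : EuclideanSpace ℝ (Fin (n+1))) 1 → ℝ}
    (hc : Continuous h) (hnn : ∀ x, 0 ≤ h x)
    (hz : ∫ x, h x ∂(volume : Measure (EuclideanSpace ℝ (Fin (n+1)))).toSphere = 0) :
    ∀ x, h x = 0 := by
  by_contra hx
  push_neg at hx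
  obtain ⟨x₀, hx₀⟩ := hx
  have hint := integrable_of_continuous_compact' (volume : Measure E).toSphere hc
  have hae := (integral_eq_zero_iff_of_nonneg_ae
    (Eventually.of_forall (fun x => hnn x)) hint).1 hz
  have hopen : IsOpen {x : sphere (0 : E) 1 | h x ≠ 0} :=
    (isOpen_compl_singleton (x := (0:ℝ))).preimage hc
  have hposμ := toSphere_pos hopen ⟨x₀, hx₀⟩
  have hzero : (volume : Measure E).toSphere {x | h x ≠ 0} = 0 := by
    have := hae
    rw [Filter.EventuallyEq, ae_iff] at this
    simpa using this
  exact absurd hzero hposμ.ne'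

lemma antitoneOn_of_hasDerivWithinAt_nonpos' {F d : ℝ → ℝ} {a b : ℝ}
    (hF : ∀ t ∈ Set.Ico a b, HasDerivWithinAt F (d t) (Set.Ico a b) t)
    (hd : ∀ t ∈ Set.Ico a b, d t ≤ 0) : AntitoneOn F (Set.Ico a b) := by
  have hder : ∀ t ∈ Set.Ioo a b, HasDerivAt F (d t) t := fun t ht =>
    (hF t (Set.Ioo_subset_Ico_self ht)).hasDerivAt (Ico_mem_nhds ht.1 ht.2)
  apply antitoneOn_of_deriv_nonpos (convex_Ico a b)
    (fun t ht => (hF t ht).continuousWithinAt)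
  · rw [interior_Ico]
    exact fun t ht => (hder t ht).differentiableAt.differentiableWithinAt
  · rw [interior_Ico]
    intro t ht
    rw [(hder t ht).deriv]
    exact hd t (Set.Ioo_subset_Ico_self ht)

end sphereAux
/-- Monotonicity of the entropy functional `J(t) = ∫_{S^n} log u(x,t) f(x) dx`
along the normalized flow `∂_t u = -θ(t) f r^{n+1} K / φ(r) + u`:
`J` is non-increasing, and its derivative vanishes at time `t` exactly when
`u` satisfies the elliptic equation `u φ(r)/(r^{n+1} K) = θ(t) f`
(i.e. `(u φ(r)/r^{n+1}) det(u_{ij}+uδ_{ij}) = θ(t) f`, since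
`K = 1/det(u_{ij}+uδ_{ij})`).  The hypothesis `hθjac` encodes the definition
`θ(t) = ∫ φ(r) dξ / ∫ f dx` together with the Jacobian identity
`dx/dξ = r^{n+1}K/u`. -/
theorem entropy_monotone_along_flow {n : ℕ} (T : ℝ) (hT : 0 < T)
    (φ : ℝ → ℝ) (hφcont : ContinuousOn φ (Set.Ioi 0)) (hφpos : ∀ s > (0:ℝ), 0 < φ s)
    (f : sphere (0 : EuclideanSpace ℝ (Fin (n+1))) 1 → ℝ)
    (hf : Continuous f) (hfpos : ∀ x, 0 < f x)
    (u r K : sphere (0 : EuclideanSpace ℝ (Fin (n+1))) 1 → ℝ → ℝ)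
    (huc : Continuous (fun p : sphere (0 : EuclideanSpace ℝ (Fin (n+1))) 1 × ℝ => u p.1 p.2))
    (hrc : Continuous (fun p : sphere (0 : EuclideanSpace ℝ (Fin (n+1))) 1 × ℝ => r p.1 p.2))
    (hKc : Continuous (fun p : sphere (0 : EuclideanSpace ℝ (Fin (n+1))) 1 × ℝ => K p.1 p.2))
    (hupos : ∀ x t, 0 < u x t) (hrpos : ∀ x t, 0 < r x t) (hKpos : ∀ x t, 0 < K x t)
    (θ : ℝ → ℝ) (hθc : Continuous θ)
    (hθjac : ∀ t ∈ Set.Ico (0:ℝ) T,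
      ∫ x, (u x t * φ (r x t)) / ((r x t) ^ (n+1) * K x t)
          ∂(volume : Measure (EuclideanSpace ℝ (Fin (n+1)))).toSphere =
        θ t * ∫ x, f x ∂(volume : Measure (EuclideanSpace ℝ (Fin (n+1)))).toSphere)
    (hflow : ∀ x, ∀ t ∈ Set.Ico (0:ℝ) T,
      HasDerivWithinAt (u x)
        (-θ t * f x * (r x t) ^ (n+1) * K x t / φ (r x t) + u x t)
        (Set.Ico (0:ℝ) T) t) :
    (∀ s ∈ Set.Ico (0:ℝ) T, ∀ t ∈ Set.Ico (0:ℝ) T, s ≤ t →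
      (∫ x, Real.log (u x t) * f x
          ∂(volume : Measure (EuclideanSpace ℝ (Fin (n+1)))).toSphere) ≤
      (∫ x, Real.log (u x s) * f x
          ∂(volume : Measure (EuclideanSpace ℝ (Fin (n+1)))).toSphere)) ∧
    (∀ t ∈ Set.Ico (0:ℝ) T, ∃ d : ℝ,
      HasDerivWithinAt
        (fun s => ∫ x, Real.log (u x s) * f x
            ∂(volume : Measure (EuclideanSpace ℝ (Fin (n+1)))).toSphere)
        d (Set.Ico (0:ℝ) T) t ∧
      d ≤ 0 ∧
      (d = 0 ↔ ∀ x, u x t * φ (r x t) / ((r x t) ^ (n+1) * K x t) = θ t * f x)) := by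

  classical
  set μ := (volume : Measure (EuclideanSpace ℝ (Fin (n+1)))).toSphere with hμdef
  have hφr : Continuous fun p : sphere (0 : EuclideanSpace ℝ (Fin (n+1))) 1 × ℝ =>
      φ (r p.1 p.2) :=
    hφcont.comp_continuous hrc fun p => hrpos p.1 p.2
  set v : sphere (0 : EuclideanSpace ℝ (Fin (n+1))) 1 → ℝ → ℝ := fun x τ =>
    (-θ τ * f x * (r x τ) ^ (n+1) * K x τ / φ (r x τ) + u x τ) / u x τ * f x with hvdef
  have hvcont : Continuous fun p : sphere (0 : EuclideanSpace ℝ (Fin (n+1))) 1 × ℝ =>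
      v p.1 p.2 := by
    simp only [hvdef]
    apply Continuous.mul _ (hf.comp continuous_fst)
    apply Continuous.div _ huc (fun p => (hupos p.1 p.2).ne')
    apply Continuous.add _ huc
    apply Continuous.div _ hφr (fun p => (hφpos _ (hrpos p.1 p.2)).ne')
    exact (((hθc.comp continuous_snd).neg.mul (hf.comp continuous_fst)).mul
      ((hrc.pow _))).mul hKc
  have hGcont : Continuous fun p : sphere (0 : EuclideanSpace ℝ (Fin (n+1))) 1 × ℝ =>
      Real.log (u p.1 p.2) * f p.1 :=
    (Real.continuousOn_log.comp_continuous huc fun p => by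
      simp [Set.mem_compl_iff, (hupos p.1 p.2).ne']).mul (hf.comp continuous_fst)
  have hGd : ∀ x, ∀ τ ∈ Set.Ico (0:ℝ) T,
      HasDerivWithinAt (fun σ => Real.log (u x σ) * f x) (v x τ) (Set.Ico (0:ℝ) T) τ := by
    intro x τ hτ
    have := ((hflow x τ hτ).log (hupos x τ).ne').mul_const (f x)
    simpa [hvdef] using this
  have hFd : ∀ t ∈ Set.Ico (0:ℝ) T,
      HasDerivWithinAt (fun s => ∫ x, Real.log (u x s) * f x ∂μ) (∫ x, v x t ∂μ)
        (Set.Ico (0:ℝ) T) t := fun t ht =>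
    hasDerivWithinAt_integral_of_continuous μ _ _ hGcont hvcont (convex_Ico 0 T) hGd ht
  have hkey : ∀ t ∈ Set.Ico (0:ℝ) T, (∫ x, v x t ∂μ) ≤ 0 ∧
      ((∫ x, v x t ∂μ) = 0 ↔
        ∀ x, u x t * φ (r x t) / ((r x t) ^ (n+1) * K x t) = θ t * f x) := by
    intro t ht
    set g : sphere (0 : EuclideanSpace ℝ (Fin (n+1))) 1 → ℝ :=
      fun x => u x t * φ (r x t) / ((r x t) ^ (n+1) * K x t) with hgdef
    have hut : Continuous fun x => u x t := huc.comp (continuous_id.prodMk continuous_const)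
    have hrt : Continuous fun x => r x t := hrc.comp (continuous_id.prodMk continuous_const)
    have hKt : Continuous fun x => K x t := hKc.comp (continuous_id.prodMk continuous_const)
    have hφt : Continuous fun x => φ (r x t) := hφr.comp (continuous_id.prodMk continuous_const)
    have hgpos : ∀ x, 0 < g x := fun x =>
      div_pos (mul_pos (hupos x t) (hφpos _ (hrpos x t)))
        (mul_pos (pow_pos (hrpos x t) _) (hKpos x t))
    have hgcont : Continuous g := (hut.mul hφt).div ((hrt.pow _).mul hKt)
      (fun x => (mul_pos (pow_pos (hrpos x t) _) (hKpos x t)).ne')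
    have hfI : 0 < ∫ x, f x ∂μ := sphere_integral_pos hf hfpos
    have hgI : 0 < ∫ x, g x ∂μ := sphere_integral_pos hgcont hgpos
    have hjac : ∫ x, g x ∂μ = θ t * ∫ x, f x ∂μ := hθjac t ht
    have hθpos : 0 < θ t := by nlinarith
    set a := Real.sqrt (θ t) with hadef
    have ha : 0 < a := Real.sqrt_pos.2 hθpos
    have ha2 : a ^ 2 = θ t := Real.sq_sqrt hθpos.le
    set w : sphere (0 : EuclideanSpace ℝ (Fin (n+1))) 1 → ℝ :=
      fun x => a * f x / Real.sqrt (g x) - Real.sqrt (g x) / a with hwdef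
    have hbx : ∀ x, 0 < Real.sqrt (g x) := fun x => Real.sqrt_pos.2 (hgpos x)
    have hb2 : ∀ x, Real.sqrt (g x) ^ 2 = g x := fun x => Real.sq_sqrt (hgpos x).le
    have hwcont : Continuous w := ((continuous_const.mul hf).div
        (Real.continuous_sqrt.comp hgcont) (fun x => (hbx x).ne')).sub
      ((Real.continuous_sqrt.comp hgcont).div_const _)
    have hid : ∀ x, v x t = -(w x)^2 + (g x / θ t - f x) := by
      intro x
      have hP : ((r x t) ^ (n+1) * K x t) ≠ 0 :=
        (mul_pos (pow_pos (hrpos x t) _) (hKpos x t)).ne'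
      have hΦ : φ (r x t) ≠ 0 := (hφpos _ (hrpos x t)).ne'
      have hU : u x t ≠ 0 := (hupos x t).ne'
      have keyv : v x t = f x - θ t * (f x)^2 / g x := by
        simp only [hvdef, hgdef]
        field_simp
        ring
      have hw2 : (w x)^2 = θ t * (f x)^2 / g x - 2 * f x + g x / θ t := by
        simp only [hwdef]
        set b := Real.sqrt (g x) with hbdef
        have hb2' : b^2 = g x := hb2 x
        have hbpos : (0:ℝ) < b := hbx x
        rw [← ha2, ← hb2']
        field_simp
        ring
      rw [keyv, hw2]; ring
    have hwint : Integrable (fun x => (w x)^2) μ :=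
      integrable_of_continuous_compact' μ (hwcont.pow 2)
    have hfint : Integrable f μ := integrable_of_continuous_compact' μ hf
    have hgint : Integrable g μ := integrable_of_continuous_compact' μ hgcont
    have hint1 : Integrable (fun x => -(w x)^2) μ :=
      integrable_of_continuous_compact' μ (hwcont.pow 2).neg
    have hint2 : Integrable (fun x => g x / θ t - f x) μ :=
      integrable_of_continuous_compact' μ ((hgcont.div_const _).sub hf)
    have hint3 : Integrable (fun x => g x / θ t) μ :=
      integrable_of_continuous_compact' μ (hgcont.div_const _)
    have hDval : (∫ x, v x t ∂μ) = -∫ x, (w x)^2 ∂μ := by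
      have h1 : (fun x => v x t) = fun x => -(w x)^2 + (g x / θ t - f x) := funext hid
      have e1 : (∫ x, v x t ∂μ)
          = (∫ x, -(w x)^2 ∂μ) + ∫ x, (g x / θ t - f x) ∂μ := by
        rw [h1]; exact integral_add hint1 hint2
      have e2 : (∫ x, (g x / θ t - f x) ∂μ)
          = (∫ x, g x / θ t ∂μ) - ∫ x, f x ∂μ := integral_sub hint3 hfint
      have e3 : (∫ x, g x / θ t ∂μ) = (∫ x, g x ∂μ) / θ t := integral_div _ _
      have e4 : (∫ x, -(w x)^2 ∂μ) = -∫ x, (w x)^2 ∂μ := integral_neg _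
      rw [e1, e2, e3, e4, hjac, mul_comm, mul_div_assoc, div_self hθpos.ne', mul_one]
      ring
    constructor
    · rw [hDval]
      have : 0 ≤ ∫ x, (w x)^2 ∂μ := integral_nonneg fun x => sq_nonneg _
      linarith
    · rw [hDval]
      constructor
      · intro h0
        have hz : ∫ x, (w x)^2 ∂μ = 0 := by linarith
        have hw0 := sphere_zero_of_integral_zero (hwcont.pow 2) (fun x => sq_nonneg _) hz
        intro x
        have hwx : w x = 0 := by
          have h2 : w x ^ 2 = 0 := hw0 x
          have := sq_nonneg (w x)
          nlinarith [h2]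
        simp only [hwdef] at hwx
        have h3 : a * f x * a = Real.sqrt (g x) * Real.sqrt (g x) :=
          (div_eq_div_iff (hbx x).ne' ha.ne').1 (sub_eq_zero.1 hwx)
        show g x = θ t * f x
        linear_combination -(hb2 x) - h3 + f x * ha2
      · intro heq
        have heq' : ∀ x, g x = θ t * f x := heq
        have hw0 : ∀ x, w x = 0 := by
          intro x
          simp only [hwdef]
          rw [sub_eq_zero, div_eq_div_iff (hbx x).ne' ha.ne']
          linear_combination f x * ha2 - heq' x - hb2 x
        have hzero : (fun x => (w x)^2) = fun _ => (0:ℝ) :=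
          funext fun x => by rw [hw0 x]; ring
        rw [hzero]
        simp
  refine ⟨?_, fun t ht => ⟨∫ x, v x t ∂μ, hFd t ht, (hkey t ht).1, (hkey t ht).2⟩⟩
  intro s hs t ht hst
  exact antitoneOn_of_hasDerivWithinAt_nonpos' hFd (fun τ hτ => (hkey τ hτ).1) hs ht hst
end
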